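/- arXiv:1511.09262 — 3 statements merged into one kernel-verified Lean document; each statement's English description precedes it below -/
import Mathlib

section
/- Let G be a graph with at least two vertices, let v be a vertex of G, and let G' be the graph obtained from G by adding a new vertex v' and the edge vv'. For a set S' of vertices of G': S' is a type I set for v' in G' with L_{S'}(v') = 0 if and only if S' = S ∪ {v'} for some set S ⊆ V(G) that is a type I set for v in G with L_S(v) ∈ {−2, −1, 1}. -/
/-- A set of vertices is independent: no two of its vertices are adjacent. -/
def IndepSet {V : Type*} (G : SimpleGraph V) (S : Set V) : Prop :=
  ∀ u ∈ S, ∀ w ∈ S, ¬ G.Adj u w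

/-- `S` is a type I set for `v` in `G`: `S` is independent, every vertex
`u ∉ S ∪ {v}` has at least one and at most two neighbors in `S`, and `v` either
belongs to `S` or has at most two neighbors in `S`. -/
def TypeISet {V : Type*} (G : SimpleGraph V) (v : V) (S : Set V) : Prop :=
  IndepSet G S ∧
    (∀ u, u ∉ S → u ≠ v →
      1 ≤ (S ∩ G.neighborSet u).ncard ∧ (S ∩ G.neighborSet u).ncard ≤ 2) ∧
    (v ∈ S ∨ (S ∩ G.neighborSet v).ncard ≤ 2)

/-- The labeling `L_S(v) = l` : `0` if `v ∈ S`; `k ≥ 1` if `v ∉ S` and `v` has exactly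
`k` neighbors in `S`; `-1` if `N[v] ∩ S = ∅` and every neighbor of `v` has exactly one
neighbor in `S`; `-2` if `N[v] ∩ S = ∅` and some neighbor of `v` has exactly two
neighbors in `S`. -/
def HasLabel {V : Type*} (G : SimpleGraph V) (v : V) (S : Set V) (l : ℤ) : Prop :=
  (v ∈ S ∧ l = 0) ∨
  (v ∉ S ∧ ∃ k : ℕ, 1 ≤ k ∧ (S ∩ G.neighborSet v).ncard = k ∧ l = (k : ℤ)) ∨
  (v ∉ S ∧ S ∩ G.neighborSet v = ∅ ∧
    (∀ u ∈ G.neighborSet v, (S ∩ G.neighborSet u).ncard = 1) ∧ l = -1) ∨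
  (v ∉ S ∧ S ∩ G.neighborSet v = ∅ ∧
    (∃ u ∈ G.neighborSet v, (S ∩ G.neighborSet u).ncard = 2) ∧ l = -2)

/-- The star `K_{1,r}` with center `none` and the `r` leaves `some i`. -/
def starGraph (r : ℕ) : SimpleGraph (Option (Fin r)) where
  Adj a b := (a = none ∧ b ≠ none) ∨ (a ≠ none ∧ b = none)
  symm := by constructor; intro a b h; tauto
  loopless := by constructor; intro a h; tauto

/-- The graph obtained from `G` by adding a new vertex `none` adjacent only to `v`. -/
def addLeaf {V : Type*} (G : SimpleGraph V) (v : V) : SimpleGraph (Option V) where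
  Adj a b := match a, b with
    | some x, some y => G.Adj x y
    | none, some y => y = v
    | some x, none => x = v
    | none, none => False
  symm := by
    constructor
    intro a b h
    match a, b with
    | some x, some y => exact h.symm
    | none, some y => exact h
    | some x, none => exact h
    | none, none => exact h
  loopless := by
    constructor
    intro a h
    match a with
    | some x => exact G.loopless.irrefl x h
    | none => exact h

/-- The graph obtained from the disjoint union of `G` and `H` by adding the edge
between `v` (in `G`) and `v'` (in `H`). -/
def joinAt {V W : Type*} (G : SimpleGraph V) (H : SimpleGraph W) (v : V) (v' : W) :
    SimpleGraph (V ⊕ W) where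
  Adj a b := match a, b with
    | Sum.inl x, Sum.inl y => G.Adj x y
    | Sum.inr x, Sum.inr y => H.Adj x y
    | Sum.inl x, Sum.inr y => x = v ∧ y = v'
    | Sum.inr x, Sum.inl y => x = v' ∧ y = v
  symm := by
    constructor
    intro a b h
    match a, b with
    | Sum.inl x, Sum.inl y => exact h.symm
    | Sum.inr x, Sum.inr y => exact h.symm
    | Sum.inl x, Sum.inr y => exact ⟨h.2, h.1⟩
    | Sum.inr x, Sum.inl y => exact ⟨h.2, h.1⟩
  loopless := by
    constructor
    intro a h
    match a with
    | Sum.inl x => exact G.loopless.irrefl x h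
    | Sum.inr x => exact H.loopless.irrefl x h


lemma addLeaf_adj_some_some {V : Type*} (G : SimpleGraph V) (v x y : V) :
    (addLeaf G v).Adj (some x) (some y) ↔ G.Adj x y := Iff.rfl

lemma addLeaf_adj_some_none {V : Type*} (G : SimpleGraph V) (v x : V) :
    (addLeaf G v).Adj (some x) none ↔ x = v := Iff.rfl

lemma addLeaf_adj_none_some {V : Type*} (G : SimpleGraph V) (v y : V) :
    (addLeaf G v).Adj none (some y) ↔ y = v := Iff.rfl

lemma inter_nbhd_eq {V : Type*} (G : SimpleGraph V) (v : V) (S : Set V) :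
    ((some '' S ∪ {none}) ∩ (addLeaf G v).neighborSet (some v))
      = insert none (some '' (S ∩ G.neighborSet v)) := by
  ext x
  cases x with
  | none =>
    simp [SimpleGraph.mem_neighborSet, addLeaf_adj_some_none]
  | some y =>
    simp [SimpleGraph.mem_neighborSet, addLeaf_adj_some_some]

lemma inter_nbhd_ne {V : Type*} (G : SimpleGraph V) (v u : V) (h : u ≠ v) (S : Set V) :
    ((some '' S ∪ {none}) ∩ (addLeaf G v).neighborSet (some u))
      = some '' (S ∩ G.neighborSet u) := by
  ext x
  cases x with
  | none =>
    simp [SimpleGraph.mem_neighborSet, addLeaf_adj_some_none, h]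
  | some y =>
    simp [SimpleGraph.mem_neighborSet, addLeaf_adj_some_some]

lemma ncard_inter_nbhd_eq {V : Type*} [Fintype V] (G : SimpleGraph V) (v : V)
    (S : Set V) :
    ((some '' S ∪ {none}) ∩ (addLeaf G v).neighborSet (some v)).ncard
      = (S ∩ G.neighborSet v).ncard + 1 := by
  rw [inter_nbhd_eq, Set.ncard_insert_of_notMem (by simp) (Set.toFinite _),
    Set.ncard_image_of_injective _ (Option.some_injective V)]

lemma ncard_inter_nbhd_ne {V : Type*} [Fintype V] (G : SimpleGraph V) (v u : V)
    (h : u ≠ v) (S : Set V) :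
    ((some '' S ∪ {none}) ∩ (addLeaf G v).neighborSet (some u)).ncard
      = (S ∩ G.neighborSet u).ncard := by
  rw [inter_nbhd_ne G v u h, Set.ncard_image_of_injective _ (Option.some_injective V)]

theorem statement13 {V : Type*} [Fintype V] [Nontrivial V] (G : SimpleGraph V)
    (v : V) (S' : Set (Option V)) :
    (TypeISet (addLeaf G v) none S' ∧ HasLabel (addLeaf G v) none S' 0) ↔
      ∃ S : Set V, S' = some '' S ∪ {none} ∧ TypeISet G v S ∧
        (HasLabel G v S (-2) ∨ HasLabel G v S (-1) ∨ HasLabel G v S 1) := by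
  constructor
  · rintro ⟨⟨hind, hcond, _⟩, hlab⟩
    -- none ∈ S'
    have hnone : none ∈ S' := by
      rcases hlab with ⟨h, _⟩ | ⟨_, k, hk1, _, h0⟩ | ⟨_, _, _, h0⟩ | ⟨_, _, _, h0⟩
      · exact h
      · omega
      · omega
      · omega
    set S : Set V := {x | some x ∈ S'} with hSdef
    have hS'eq : S' = some '' S ∪ {none} := by
      ext x
      cases x with
      | none => simp [hnone]
      | some y => simp [hSdef]
    rw [hS'eq] at hind hcond
    have hvS : v ∉ S := by
      intro hv
      exact hind none (Or.inr rfl) (some v) (Or.inl ⟨v, hv, rfl⟩) rfl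
    have hcondG : ∀ u, u ∉ S → u ≠ v →
        1 ≤ (S ∩ G.neighborSet u).ncard ∧ (S ∩ G.neighborSet u).ncard ≤ 2 := by
      intro u hu hne
      have := hcond (some u) (by simp [hu]) (by simp)
      rwa [ncard_inter_nbhd_ne G v u hne] at this
    have hcv : (S ∩ G.neighborSet v).ncard ≤ 1 := by
      have := (hcond (some v) (by simp [hvS]) (by simp)).2
      rw [ncard_inter_nbhd_eq] at this
      omega
    have hindG : IndepSet G S := by
      intro x hx y hy hadj
      exact hind (some x) (Or.inl ⟨x, hx, rfl⟩) (some y) (Or.inl ⟨y, hy, rfl⟩) hadj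
    refine ⟨S, hS'eq, ⟨hindG, hcondG, Or.inr (by omega)⟩, ?_⟩
    rcases Nat.lt_or_ge (S ∩ G.neighborSet v).ncard 1 with hc | hc
    · -- count 0
      have hempty : S ∩ G.neighborSet v = ∅ :=
        (Set.ncard_eq_zero (Set.toFinite _)).mp (by omega)
      by_cases hall : ∀ u ∈ G.neighborSet v, (S ∩ G.neighborSet u).ncard = 1
      · exact Or.inr (Or.inl (Or.inr (Or.inr (Or.inl ⟨hvS, hempty, hall, rfl⟩))))
      · push_neg at hall
        obtain ⟨u, hu, hne1⟩ := hall
        have huS : u ∉ S := by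
          intro h
          have : u ∈ S ∩ G.neighborSet v := ⟨h, hu⟩
          simp [hempty] at this
        have hune : u ≠ v := fun h => G.loopless.irrefl v (h ▸ hu)
        have := hcondG u huS hune
        exact Or.inl (Or.inr (Or.inr (Or.inr ⟨hvS, hempty, ⟨u, hu, by omega⟩, rfl⟩)))
    · -- count 1
      have hc1 : (S ∩ G.neighborSet v).ncard = 1 := by omega
      exact Or.inr (Or.inr (Or.inr (Or.inl ⟨hvS, 1, le_refl 1, hc1, by norm_num⟩)))
  · rintro ⟨S, rfl, ⟨hind, hcond, _⟩, hlab⟩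
    have key : v ∉ S ∧ (S ∩ G.neighborSet v).ncard ≤ 1 := by
      rcases hlab with h | h | h
      · rcases h with ⟨hv, _⟩ | ⟨hv, k, hk1, hck, hkl⟩ | ⟨hv, he, _, _⟩ | ⟨hv, he, _, _⟩
        · omega
        · omega
        · exact ⟨hv, by simp [he]⟩
        · exact ⟨hv, by simp [he]⟩
      · rcases h with ⟨hv, _⟩ | ⟨hv, k, hk1, hck, hkl⟩ | ⟨hv, he, _, _⟩ | ⟨hv, he, _, h2⟩
        · omega
        · omega
        · exact ⟨hv, by simp [he]⟩
        · omega
      · rcases h with ⟨hv, h0⟩ | ⟨hv, k, hk1, hck, hkl⟩ | ⟨hv, he, _, h1⟩ | ⟨hv, he, _, h2⟩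
        · omega
        · have : k = 1 := by omega
          exact ⟨hv, by omega⟩
        · omega
        · omega
    obtain ⟨hvS, hcv⟩ := key
    refine ⟨⟨?_, ?_, Or.inl (Or.inr rfl)⟩, Or.inl ⟨Or.inr rfl, rfl⟩⟩
    · rintro a ha b hb hadj
      match a, b with
      | some x, some y =>
        have hx : x ∈ S := by rcases ha with ⟨x', hx', h⟩ | h; · cases h; exact hx'
                              · cases h
        have hy : y ∈ S := by rcases hb with ⟨y', hy', h⟩ | h; · cases h; exact hy'
                              · cases h
        exact hind x hx y hy hadj
      | some x, none =>
        have hx : x ∈ S := by rcases ha with ⟨x', hx', h⟩ | h; · cases h; exact hx'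
                              · cases h
        have : x = v := hadj
        exact hvS (this ▸ hx)
      | none, some y =>
        have hy : y ∈ S := by rcases hb with ⟨y', hy', h⟩ | h; · cases h; exact hy'
                              · cases h
        have : y = v := hadj
        exact hvS (this ▸ hy)
      | none, none => exact hadj
    · intro u hu hne
      match u with
      | none => exact absurd rfl hne
      | some w =>
        have hwS : w ∉ S := fun h => hu (Or.inl ⟨w, h, rfl⟩)
        by_cases hw : w = v
        · subst hw
          rw [ncard_inter_nbhd_eq]
          omega
        · rw [ncard_inter_nbhd_ne G v w hw]
          exact hcond w hwS hw
end

section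
/- Let G and G' be two vertex-disjoint graphs, each with at least two vertices, let v be a vertex of G and v' a vertex of G', and let G'' be the graph obtained from the disjoint union of G and G' by adding the edge vv'. Then: (i) a set S'' of vertices of G'' is a type I set for v' in G'' with L_{S''}(v') = 1 if and only if S'' = S ∪ S' where S = S'' ∩ V(G) is a type I set for v in G, S' = S'' ∩ V(G') is a type I set for v' in G', and the pair (L_S(v), L_{S'}(v')) belongs to {(0,−2), (0,−1), (1,1), (2,1)}; (ii) moreover, if R ⊆ V(G) is a type I set for v in G with L_R(v) = −1 and S' ⊆ V(G') is a type I set for v' in G' with L_{S'}(v') ∈ {−2, −1}, then S'' = (R ∪ {v}) ∪ S' is a type I set for v' in G'' with L_{S''}(v') = 1. -/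
section Helpers
set_option linter.unusedSectionVars false
attribute [local instance] Classical.propDecidable

variable {V W : Type*} [Fintype V] [Fintype W]
  {G : SimpleGraph V} {G' : SimpleGraph W} {v : V} {v' : W}

lemma joinAt_adj_inl_inl (x y : V) :
    (joinAt G G' v v').Adj (Sum.inl x) (Sum.inl y) ↔ G.Adj x y := Iff.rfl

lemma joinAt_adj_inr_inr (x y : W) :
    (joinAt G G' v v').Adj (Sum.inr x) (Sum.inr y) ↔ G'.Adj x y := Iff.rfl

lemma joinAt_adj_inl_inr (x : V) (y : W) :
    (joinAt G G' v v').Adj (Sum.inl x) (Sum.inr y) ↔ x = v ∧ y = v' := Iff.rfl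

lemma joinAt_adj_inr_inl (x : W) (y : V) :
    (joinAt G G' v v').Adj (Sum.inr x) (Sum.inl y) ↔ x = v' ∧ y = v := Iff.rfl

lemma joinAt_nbhd_inl (S : Set V) (S' : Set W) (u : V) :
    (Sum.inl '' S ∪ Sum.inr '' S') ∩ (joinAt G G' v v').neighborSet (Sum.inl u)
      = Sum.inl '' (S ∩ G.neighborSet u)
        ∪ (if u = v ∧ v' ∈ S' then {Sum.inr v'} else (∅ : Set (V ⊕ W))) := by
  ext x
  cases x with
  | inl y =>
    by_cases h : u = v ∧ v' ∈ S' <;>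
      simp [SimpleGraph.mem_neighborSet, joinAt_adj_inl_inl, h]
  | inr y =>
    by_cases h : u = v ∧ v' ∈ S' <;>
      simp [SimpleGraph.mem_neighborSet, joinAt_adj_inl_inr, h] <;> aesop

lemma joinAt_nbhd_inr (S : Set V) (S' : Set W) (u : W) :
    (Sum.inl '' S ∪ Sum.inr '' S') ∩ (joinAt G G' v v').neighborSet (Sum.inr u)
      = Sum.inr '' (S' ∩ G'.neighborSet u)
        ∪ (if u = v' ∧ v ∈ S then {Sum.inl v} else (∅ : Set (V ⊕ W))) := by
  ext x
  cases x with
  | inl y =>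
    by_cases h : u = v' ∧ v ∈ S <;>
      simp [SimpleGraph.mem_neighborSet, joinAt_adj_inr_inl, h] <;> aesop
  | inr y =>
    by_cases h : u = v' ∧ v ∈ S <;>
      simp [SimpleGraph.mem_neighborSet, joinAt_adj_inr_inr, h]

lemma joinAt_ncard_inl (S : Set V) (S' : Set W) (u : V) :
    ((Sum.inl '' S ∪ Sum.inr '' S') ∩ (joinAt G G' v v').neighborSet (Sum.inl u)).ncard
      = (S ∩ G.neighborSet u).ncard + (if u = v ∧ v' ∈ S' then 1 else 0) := by
  rw [joinAt_nbhd_inl]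
  split_ifs with h
  · rw [Set.ncard_union_eq (by simp) (Set.toFinite _) (Set.toFinite _),
      Set.ncard_image_of_injective _ Sum.inl_injective, Set.ncard_singleton]
  · simp [Set.ncard_image_of_injective _ Sum.inl_injective]

lemma joinAt_ncard_inr (S : Set V) (S' : Set W) (u : W) :
    ((Sum.inl '' S ∪ Sum.inr '' S') ∩ (joinAt G G' v v').neighborSet (Sum.inr u)).ncard
      = (S' ∩ G'.neighborSet u).ncard + (if u = v' ∧ v ∈ S then 1 else 0) := by
  rw [joinAt_nbhd_inr]
  split_ifs with h
  · rw [Set.ncard_union_eq (by simp) (Set.toFinite _) (Set.toFinite _),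
      Set.ncard_image_of_injective _ Sum.inr_injective, Set.ncard_singleton]
  · simp [Set.ncard_image_of_injective _ Sum.inr_injective]

lemma ncard_union_singleton_inter {v : V} (R A : Set V) (hv : v ∉ R) :
    ((R ∪ {v}) ∩ A).ncard = (R ∩ A).ncard + (if v ∈ A then 1 else 0) := by
  rw [Set.union_inter_distrib_right]
  split_ifs with h
  · rw [Set.inter_eq_self_of_subset_left (Set.singleton_subset_iff.mpr h),
      Set.ncard_union_eq (by simp [hv]) (Set.toFinite _) (Set.toFinite _),
      Set.ncard_singleton]
  · rw [Set.singleton_inter_eq_empty.mpr h, Set.union_empty, Nat.add_zero]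

lemma hasLabel_zero {S : Set V} (h : HasLabel G v S 0) : v ∈ S := by
  rcases h with ⟨h, _⟩ | ⟨_, k, hk, _, hl⟩ | ⟨_, _, _, hl⟩ | ⟨_, _, _, hl⟩
  · exact h
  all_goals omega

lemma hasLabel_pos {S : Set V} {k : ℕ} (hk : 1 ≤ k) (h : HasLabel G v S (k : ℤ)) :
    v ∉ S ∧ (S ∩ G.neighborSet v).ncard = k := by
  rcases h with ⟨_, hl⟩ | ⟨hv, m, hm, hc, hl⟩ | ⟨_, _, _, hl⟩ | ⟨_, _, _, hl⟩
  · omega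
  · refine ⟨hv, ?_⟩; omega
  all_goals omega

lemma hasLabel_neg1 {S : Set V} (h : HasLabel G v S (-1)) :
    v ∉ S ∧ S ∩ G.neighborSet v = ∅ ∧
      ∀ u ∈ G.neighborSet v, (S ∩ G.neighborSet u).ncard = 1 := by
  rcases h with ⟨_, hl⟩ | ⟨_, m, hm, _, hl⟩ | ⟨hv, he, hu, _⟩ | ⟨_, _, _, hl⟩
  · omega
  · omega
  · exact ⟨hv, he, hu⟩
  · omega

lemma hasLabel_nonpos {S : Set V} {l : ℤ} (hl : l = -1 ∨ l = -2) (h : HasLabel G v S l) :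
    v ∉ S ∧ S ∩ G.neighborSet v = ∅ := by
  rcases h with ⟨_, h'⟩ | ⟨_, m, hm, _, h'⟩ | ⟨hv, he, _, _⟩ | ⟨hv, he, _, _⟩
  · omega
  · omega
  all_goals exact ⟨hv, he⟩

end Helpers

theorem statement18 {V W : Type*} [Fintype V] [Fintype W] [Nontrivial V]
    [Nontrivial W] (G : SimpleGraph V) (G' : SimpleGraph W) (v : V) (v' : W) :
    (∀ S'' : Set (V ⊕ W),
      (TypeISet (joinAt G G' v v') (Sum.inr v') S'' ∧
          HasLabel (joinAt G G' v v') (Sum.inr v') S'' 1) ↔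
        ∃ (S : Set V) (S' : Set W), S = Sum.inl ⁻¹' S'' ∧ S' = Sum.inr ⁻¹' S'' ∧
          S'' = Sum.inl '' S ∪ Sum.inr '' S' ∧ TypeISet G v S ∧ TypeISet G' v' S' ∧
          ((HasLabel G v S 0 ∧ HasLabel G' v' S' (-2)) ∨
           (HasLabel G v S 0 ∧ HasLabel G' v' S' (-1)) ∨
           (HasLabel G v S 1 ∧ HasLabel G' v' S' 1) ∨
           (HasLabel G v S 2 ∧ HasLabel G' v' S' 1))) ∧
    (∀ (R : Set V) (S' : Set W), TypeISet G v R → HasLabel G v R (-1) →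
      TypeISet G' v' S' →
      (HasLabel G' v' S' (-2) ∨ HasLabel G' v' S' (-1)) →
      TypeISet (joinAt G G' v v') (Sum.inr v')
          (Sum.inl '' (R ∪ {v}) ∪ Sum.inr '' S') ∧
        HasLabel (joinAt G G' v v') (Sum.inr v')
          (Sum.inl '' (R ∪ {v}) ∪ Sum.inr '' S') 1) := by
  classical
  constructor
  · intro S''
    constructor
    · rintro ⟨⟨hind, hcard, hv3⟩, hlab⟩
      set S : Set V := Sum.inl ⁻¹' S'' with hS
      set S' : Set W := Sum.inr ⁻¹' S'' with hS'
      have hU : S'' = Sum.inl '' S ∪ Sum.inr '' S' := by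
        rw [hS, hS']; ext x; cases x <;> simp
      have cardL : ∀ u : V, u ∉ S →
          1 ≤ (S ∩ G.neighborSet u).ncard + (if u = v ∧ v' ∈ S' then 1 else 0) ∧
            (S ∩ G.neighborSet u).ncard + (if u = v ∧ v' ∈ S' then 1 else 0) ≤ 2 := by
        intro u hu
        have h2 := hcard (Sum.inl u) hu (by simp)
        rwa [hU, joinAt_ncard_inl] at h2
      have cardR : ∀ u : W, u ∉ S' → u ≠ v' →
          1 ≤ (S' ∩ G'.neighborSet u).ncard ∧ (S' ∩ G'.neighborSet u).ncard ≤ 2 := by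
        intro u hu hne
        have h2 := hcard (Sum.inr u) hu (by simp [hne])
        rw [hU, joinAt_ncard_inr] at h2
        simpa [hne] using h2
      obtain ⟨hv'S', hone⟩ :
          v' ∉ S' ∧ (S' ∩ G'.neighborSet v').ncard + (if v ∈ S then 1 else 0) = 1 := by
        obtain ⟨hv', hc⟩ := hasLabel_pos (k := 1) le_rfl (by exact_mod_cast hlab)
        rw [hU, joinAt_ncard_inr] at hc
        refine ⟨hv', ?_⟩
        simpa using hc
      have hTG : TypeISet G v S := by
        refine ⟨?_, ?_, ?_⟩
        · intro a ha b hb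
          exact hind (Sum.inl a) ha (Sum.inl b) hb
        · intro u hu hne
          have h3 := cardL u hu
          simpa [hne] using h3
        · by_cases hv : v ∈ S
          · exact Or.inl hv
          · right
            have h3 := (cardL v hv).2
            simpa [hv'S'] using h3
      have hTG' : TypeISet G' v' S' := by
        refine ⟨?_, fun u hu hne => cardR u hu hne, ?_⟩
        · intro a ha b hb
          exact hind (Sum.inr a) ha (Sum.inr b) hb
        · right
          split_ifs at hone <;> omega
      refine ⟨S, S', rfl, rfl, hU, hTG, hTG', ?_⟩
      by_cases hv : v ∈ S
      · have hc0 : (S' ∩ G'.neighborSet v').ncard = 0 := by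
          simp [hv] at hone; omega
        have hemp : S' ∩ G'.neighborSet v' = ∅ := (Set.ncard_eq_zero (Set.toFinite _)).mp hc0
        have hnb : ∀ u ∈ G'.neighborSet v',
            1 ≤ (S' ∩ G'.neighborSet u).ncard ∧ (S' ∩ G'.neighborSet u).ncard ≤ 2 := by
          intro u hu
          have hune : u ≠ v' := fun h => G'.loopless.irrefl v' (h ▸ hu)
          have huS' : u ∉ S' := fun h => (Set.eq_empty_iff_forall_notMem.mp hemp u) ⟨h, hu⟩
          exact cardR u huS' hune
        by_cases hall : ∀ u ∈ G'.neighborSet v', (S' ∩ G'.neighborSet u).ncard = 1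
        · exact Or.inr (Or.inl ⟨Or.inl ⟨hv, rfl⟩,
            Or.inr (Or.inr (Or.inl ⟨hv'S', hemp, hall, rfl⟩))⟩)
        · push_neg at hall
          obtain ⟨u, hu, hne1⟩ := hall
          have h2 : (S' ∩ G'.neighborSet u).ncard = 2 := by
            have := hnb u hu; omega
          exact Or.inl ⟨Or.inl ⟨hv, rfl⟩,
            Or.inr (Or.inr (Or.inr ⟨hv'S', hemp, ⟨u, hu, h2⟩, rfl⟩))⟩
      · have hc1 : (S' ∩ G'.neighborSet v').ncard = 1 := by
          simp only [hv, if_false, add_zero] at hone; exact hone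
        have hL' : HasLabel G' v' S' 1 := Or.inr (Or.inl ⟨hv'S', 1, le_rfl, hc1, by norm_num⟩)
        have hcv := cardL v hv
        simp [hv'S'] at hcv
        have hdis : (S ∩ G.neighborSet v).ncard = 1 ∨ (S ∩ G.neighborSet v).ncard = 2 := by omega
        rcases hdis with h1 | h2
        · exact Or.inr (Or.inr (Or.inl ⟨Or.inr (Or.inl ⟨hv, 1, le_rfl, h1, by norm_num⟩), hL'⟩))
        · exact Or.inr (Or.inr (Or.inr ⟨Or.inr (Or.inl ⟨hv, 2, by norm_num, h2, by norm_num⟩), hL'⟩))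
    · rintro ⟨S, S', -, -, hU, ⟨hindG, hcardG, -⟩, ⟨hindG', hcardG', -⟩, hcases⟩
      subst hU
      have hv'S' : v' ∉ S' := by
        rcases hcases with ⟨-, h⟩ | ⟨-, h⟩ | ⟨-, h⟩ | ⟨-, h⟩
        · exact (hasLabel_nonpos (Or.inr rfl) h).1
        · exact (hasLabel_nonpos (Or.inl rfl) h).1
        · exact (hasLabel_pos (k := 1) le_rfl (by exact_mod_cast h)).1
        · exact (hasLabel_pos (k := 1) le_rfl (by exact_mod_cast h)).1
      have hkey : (S' ∩ G'.neighborSet v').ncard + (if v ∈ S then 1 else 0) = 1 := by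
        rcases hcases with ⟨h0, h⟩ | ⟨h0, h⟩ | ⟨h1, h⟩ | ⟨h1, h⟩
        · have hm := hasLabel_zero h0
          have he := (hasLabel_nonpos (Or.inr rfl) h).2
          simp [hm, he]
        · have hm := hasLabel_zero h0
          have he := (hasLabel_nonpos (Or.inl rfl) h).2
          simp [hm, he]
        · have hv0 := (hasLabel_pos (k := 1) le_rfl (by exact_mod_cast h1)).1
          have hc := (hasLabel_pos (k := 1) le_rfl (by exact_mod_cast h)).2
          simp [hv0, hc]
        · have hv0 := (hasLabel_pos (k := 2) (by norm_num) (by exact_mod_cast h1)).1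
          have hc := (hasLabel_pos (k := 1) le_rfl (by exact_mod_cast h)).2
          simp [hv0, hc]
      have hvcount : v ∉ S →
          1 ≤ (S ∩ G.neighborSet v).ncard ∧ (S ∩ G.neighborSet v).ncard ≤ 2 := by
        intro hv
        rcases hcases with ⟨h0, -⟩ | ⟨h0, -⟩ | ⟨h1, -⟩ | ⟨h1, -⟩
        · exact absurd (hasLabel_zero h0) hv
        · exact absurd (hasLabel_zero h0) hv
        · have := (hasLabel_pos (k := 1) le_rfl (by exact_mod_cast h1)).2; omega
        · have := (hasLabel_pos (k := 2) (by norm_num) (by exact_mod_cast h1)).2; omega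
      have hkey' : ((Sum.inl '' S ∪ Sum.inr '' S') ∩
          (joinAt G G' v v').neighborSet (Sum.inr v')).ncard = 1 := by
        rw [joinAt_ncard_inr]
        simpa using hkey
      refine ⟨⟨?_, ?_, Or.inr (by rw [hkey']; norm_num)⟩, ?_⟩
      · rintro (a | a) ha (b | b) hb hadj
        · exact hindG a (by simpa using ha) b (by simpa using hb) hadj
        · exact hv'S' (hadj.2 ▸ (by simpa using hb))
        · exact hv'S' (hadj.1 ▸ (by simpa using ha))
        · exact hindG' a (by simpa using ha) b (by simpa using hb) hadj
      · rintro (u | u) hu hne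
        · have hu' : u ∉ S := fun h => hu (by simp [h])
          rw [joinAt_ncard_inl, if_neg (fun hc => hv'S' hc.2)]
          by_cases huv : u = v
          · subst huv
            have := hvcount hu'
            omega
          · have := hcardG u hu' huv
            omega
        · have hu' : u ∉ S' := fun h => hu (by simp [h])
          have hne' : u ≠ v' := fun h => hne (by rw [h])
          rw [joinAt_ncard_inr, if_neg (fun hc => hne' hc.1)]
          have := hcardG' u hu' hne'
          omega
      · exact Or.inr (Or.inl ⟨by simpa using hv'S', 1, le_rfl, hkey', by norm_num⟩)
  · rintro R S' ⟨hindR, hcardR, -⟩ hlabR hTS' hlabS'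
    obtain ⟨hvR, hRN, hR1⟩ := hasLabel_neg1 hlabR
    obtain ⟨hv'1, hv'2⟩ : v' ∉ S' ∧ S' ∩ G'.neighborSet v' = ∅ := by
      rcases hlabS' with h | h
      · exact hasLabel_nonpos (Or.inr rfl) h
      · exact hasLabel_nonpos (Or.inl rfl) h
    obtain ⟨hindG', hcardG', -⟩ := hTS'
    have hkey' : ((Sum.inl '' (R ∪ {v}) ∪ Sum.inr '' S') ∩
        (joinAt G G' v v').neighborSet (Sum.inr v')).ncard = 1 := by
      rw [joinAt_ncard_inr]
      simp [hv'2]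
    have hcnt : ∀ u : V, u ∉ R → u ≠ v →
        1 ≤ ((R ∪ {v}) ∩ G.neighborSet u).ncard ∧
          ((R ∪ {v}) ∩ G.neighborSet u).ncard ≤ 2 := by
      intro u hu hne
      rw [ncard_union_singleton_inter R _ hvR]
      by_cases hadj : v ∈ G.neighborSet u
      · have h1 : (R ∩ G.neighborSet u).ncard = 1 :=
          hR1 u ((show G.Adj u v from hadj).symm)
        rw [h1, if_pos hadj]
        omega
      · rw [if_neg hadj]
        have := hcardR u hu hne
        omega
    refine ⟨⟨?_, ?_, Or.inr (by rw [hkey']; norm_num)⟩, ?_⟩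
    · rintro (a | a) ha (b | b) hb hadj
      · have ha' : a ∈ R ∪ {v} := by simpa using ha
        have hb' : b ∈ R ∪ {v} := by simpa using hb
        rcases ha' with ha' | ha' <;> rcases hb' with hb' | hb'
        · exact hindR a ha' b hb' hadj
        · have hb'' : b = v := hb'
          exact Set.eq_empty_iff_forall_notMem.mp hRN a
            ⟨ha', hb'' ▸ (show G.Adj a b from hadj).symm⟩
        · have ha'' : a = v := ha'
          exact Set.eq_empty_iff_forall_notMem.mp hRN b
            ⟨hb', ha'' ▸ (show G.Adj a b from hadj)⟩
        · have hab : a = b := (show a = v from ha').trans (show b = v from hb').symm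
          subst hab
          exact G.loopless.irrefl a hadj
      · exact hv'1 (hadj.2 ▸ (by simpa using hb))
      · exact hv'1 (hadj.1 ▸ (by simpa using ha))
      · exact hindG' a (by simpa using ha) b (by simpa using hb) hadj
    · rintro (u | u) hu hne
      · have hu' : u ∉ R ∪ {v} := fun h => hu (by simp; simpa using h)
        have hu1 : u ∉ R := fun h => hu' (Or.inl h)
        have hu2 : u ≠ v := fun h => hu' (Or.inr h)
        rw [joinAt_ncard_inl, if_neg (fun hc => hv'1 hc.2)]
        have := hcnt u hu1 hu2
        omega
      · have hu' : u ∉ S' := fun h => hu (by simp [h])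
        have hne' : u ≠ v' := fun h => hne (by rw [h])
        rw [joinAt_ncard_inr, if_neg (fun hc => hne' hc.1)]
        have := hcardG' u hu' hne'
        omega
    · exact Or.inr (Or.inl ⟨by simpa using hv'1, 1, le_rfl, hkey', by norm_num⟩)
end

section
/- Let G and G' be two vertex-disjoint graphs, each with at least two vertices, let v be a vertex of G and v' a vertex of G', and let G'' be the graph obtained from the disjoint union of G and G' by adding the edge vv'. Then: (i) a set S'' of vertices of G'' is a type I set for v' in G'' with L_{S''}(v') = 2 if and only if S'' = S ∪ S' where S = S'' ∩ V(G) is a type I set for v in G, S' = S'' ∩ V(G') is a type I set for v' in G', and the pair (L_S(v), L_{S'}(v')) belongs to {(0,1), (1,2), (2,2)}; (ii) moreover, if R ⊆ V(G) is a type I set for v in G with L_R(v) = −1 and S' ⊆ V(G') is a type I set for v' in G' with L_{S'}(v') = 1, then S'' = (R ∪ {v}) ∪ S' is a type I set for v' in G'' with L_{S''}(v') = 2. -/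
section Helpers
open scoped Classical
variable {V W : Type*} (G : SimpleGraph V) (G' : SimpleGraph W) (v : V) (v' : W)

lemma nbr_inl_ne (u : V) (hu : u ≠ v) :
    (joinAt G G' v v').neighborSet (Sum.inl u) = Sum.inl '' G.neighborSet u := by
  ext b
  cases b with
  | inl y => simp [joinAt, SimpleGraph.neighborSet]
  | inr y => simp [joinAt, SimpleGraph.neighborSet, hu]

lemma nbr_inl_v :
    (joinAt G G' v v').neighborSet (Sum.inl v) =
      Sum.inl '' G.neighborSet v ∪ {Sum.inr v'} := by
  ext b
  cases b with
  | inl y => simp [joinAt, SimpleGraph.neighborSet]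
  | inr y => simp [joinAt, SimpleGraph.neighborSet]

lemma nbr_inr_ne (u : W) (hu : u ≠ v') :
    (joinAt G G' v v').neighborSet (Sum.inr u) = Sum.inr '' G'.neighborSet u := by
  ext b
  cases b with
  | inl y => simp [joinAt, SimpleGraph.neighborSet, hu]
  | inr y => simp [joinAt, SimpleGraph.neighborSet]

lemma nbr_inr_v' :
    (joinAt G G' v v').neighborSet (Sum.inr v') =
      Sum.inr '' G'.neighborSet v' ∪ {Sum.inl v} := by
  ext b
  cases b with
  | inl y => simp [joinAt, SimpleGraph.neighborSet]
  | inr y => simp [joinAt, SimpleGraph.neighborSet]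

lemma inter_inl (S'' : Set (V ⊕ W)) (A : Set V) :
    S'' ∩ (Sum.inl '' A : Set (V ⊕ W)) = Sum.inl '' (Sum.inl ⁻¹' S'' ∩ A) := by
  rw [Set.image_inter Sum.inl_injective, Set.image_preimage_eq_inter_range]
  ext b; cases b <;> simp

lemma inter_inr (S'' : Set (V ⊕ W)) (A : Set W) :
    S'' ∩ (Sum.inr '' A : Set (V ⊕ W)) = Sum.inr '' (Sum.inr ⁻¹' S'' ∩ A) := by
  rw [Set.image_inter Sum.inr_injective, Set.image_preimage_eq_inter_range]
  ext b; cases b <;> simp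

lemma ncard_inter_inl (S'' : Set (V ⊕ W)) (A : Set V) :
    (S'' ∩ (Sum.inl '' A : Set (V ⊕ W))).ncard = (Sum.inl ⁻¹' S'' ∩ A).ncard := by
  rw [inter_inl, Set.ncard_image_of_injective _ Sum.inl_injective]

lemma ncard_inter_inr (S'' : Set (V ⊕ W)) (A : Set W) :
    (S'' ∩ (Sum.inr '' A : Set (V ⊕ W))).ncard = (Sum.inr ⁻¹' S'' ∩ A).ncard := by
  rw [inter_inr, Set.ncard_image_of_injective _ Sum.inr_injective]

lemma ncard_inter_inl_sing [Fintype V] [Fintype W] (S'' : Set (V ⊕ W)) (A : Set V) (b : W) :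
    (S'' ∩ (Sum.inl '' A ∪ {Sum.inr b} : Set (V ⊕ W))).ncard =
      (Sum.inl ⁻¹' S'' ∩ A).ncard + (if Sum.inr b ∈ S'' then 1 else 0) := by
  rw [Set.inter_union_distrib_left, Set.ncard_union_eq, ncard_inter_inl]
  · congr 1
    split_ifs with h
    · rw [Set.inter_eq_self_of_subset_right (by simpa using h), Set.ncard_singleton]
    · rw [Set.singleton_inter_eq_empty.mpr h |> (Set.inter_comm _ _).trans, Set.ncard_empty]
  · refine Set.disjoint_left.mpr ?_
    rintro x ⟨hx, y, -, rfl⟩ ⟨-, hx2⟩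
    simp at hx2

lemma ncard_inter_inr_sing [Fintype V] [Fintype W] (S'' : Set (V ⊕ W)) (A : Set W) (b : V) :
    (S'' ∩ (Sum.inr '' A ∪ {Sum.inl b} : Set (V ⊕ W))).ncard =
      (Sum.inr ⁻¹' S'' ∩ A).ncard + (if Sum.inl b ∈ S'' then 1 else 0) := by
  rw [Set.inter_union_distrib_left, Set.ncard_union_eq, ncard_inter_inr]
  · congr 1
    split_ifs with h
    · rw [Set.inter_eq_self_of_subset_right (by simpa using h), Set.ncard_singleton]
    · rw [Set.singleton_inter_eq_empty.mpr h |> (Set.inter_comm _ _).trans, Set.ncard_empty]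
  · refine Set.disjoint_left.mpr ?_
    rintro x ⟨hx, y, -, rfl⟩ ⟨-, hx2⟩
    simp at hx2

end Helpers

section Labels
variable {V : Type*} (G : SimpleGraph V) (v : V) (S : Set V)

lemma hasLabel_nat (k : ℕ) (hk : 1 ≤ k) (h : HasLabel G v S (k : ℤ)) :
    v ∉ S ∧ (S ∩ G.neighborSet v).ncard = k := by
  rcases h with ⟨_, h0⟩ | ⟨hv, k', hk', hc, he⟩ | ⟨_, _, _, h⟩ | ⟨_, _, _, h⟩
  · omega
  · have : k' = k := by exact_mod_cast he.symm
    subst this; exact ⟨hv, hc⟩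
  · omega
  · omega

lemma hasLabel_neg_one (h : HasLabel G v S (-1)) :
    v ∉ S ∧ S ∩ G.neighborSet v = ∅ ∧
      ∀ u ∈ G.neighborSet v, (S ∩ G.neighborSet u).ncard = 1 := by
  rcases h with ⟨_, h0⟩ | ⟨hv, k', hk', hc, he⟩ | ⟨h1, h2, h3, _⟩ | ⟨_, _, _, h⟩
  · omega
  · omega
  · exact ⟨h1, h2, h3⟩
  · omega

end Labels

lemma typeI_insert {V : Type*} [Fintype V] (G : SimpleGraph V) (v : V) (R : Set V)
    (hR : TypeISet G v R) (hl : HasLabel G v R (-1)) : TypeISet G v (R ∪ {v}) := by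
  obtain ⟨hvR, hRN, hnb⟩ := hasLabel_neg_one G v R hl
  obtain ⟨hind, hcond, -⟩ := hR
  have hnotadj : ∀ w ∈ R, ¬ G.Adj v w := by
    intro w hw hadj
    exact absurd (Set.eq_empty_iff_forall_notMem.mp hRN w ⟨hw, hadj⟩) (fun h => h)
  refine ⟨?_, ?_, Or.inl (by simp)⟩
  · rintro u (hu | rfl) w (hw | rfl) hadj
    · exact hind u hu w hw hadj
    · exact hnotadj u hu hadj.symm
    · exact hnotadj w hw hadj
    · exact G.loopless.irrefl _ hadj
  · intro u hu hune
    have huR : u ∉ R := fun h => hu (Or.inl h)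
    have hsplit : (R ∪ {v}) ∩ G.neighborSet u =
        (R ∩ G.neighborSet u) ∪ ({v} ∩ G.neighborSet u) := by
      rw [Set.union_inter_distrib_right]
    by_cases hadj : G.Adj u v
    · have h1 : (R ∩ G.neighborSet u).ncard = 1 := hnb u hadj.symm
      have hv' : {v} ∩ G.neighborSet u = {v} := by
        rw [Set.inter_eq_self_of_subset_left]; simpa using hadj
      have hdisj : Disjoint (R ∩ G.neighborSet u) ({v} ∩ G.neighborSet u) := by
        refine Set.disjoint_left.mpr ?_
        rintro x ⟨hx, -⟩ ⟨rfl, -⟩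
        exact hvR hx
      rw [hsplit, Set.ncard_union_eq hdisj, h1, hv', Set.ncard_singleton]
      omega
    · have hv' : {v} ∩ G.neighborSet u = ∅ := by
        ext x; simp only [Set.mem_inter_iff, Set.mem_singleton_iff, Set.mem_empty_iff_false,
          iff_false, not_and]
        rintro rfl h
        exact hadj h
      rw [hsplit, hv', Set.union_empty]
      exact hcond u huR hune

lemma preim_inl {V W : Type*} (S : Set V) (S' : Set W) :
    Sum.inl ⁻¹' (Sum.inl '' S ∪ Sum.inr '' S') = S := by ext x; simp

lemma preim_inr {V W : Type*} (S : Set V) (S' : Set W) :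
    Sum.inr ⁻¹' (Sum.inl '' S ∪ Sum.inr '' S') = S' := by ext x; simp

lemma backward_main {V W : Type*} [Fintype V] [Fintype W]
    (G : SimpleGraph V) (G' : SimpleGraph W) (v : V) (v' : W)
    (S : Set V) (S' : Set W) (hS : TypeISet G v S) (hS' : TypeISet G' v' S')
    (hv'S' : v' ∉ S')
    (hcases : (v ∈ S ∧ (S' ∩ G'.neighborSet v').ncard = 1) ∨
      (v ∉ S ∧ ((S ∩ G.neighborSet v).ncard = 1 ∨ (S ∩ G.neighborSet v).ncard = 2) ∧
        (S' ∩ G'.neighborSet v').ncard = 2)) :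
    TypeISet (joinAt G G' v v') (Sum.inr v') (Sum.inl '' S ∪ Sum.inr '' S') ∧
      HasLabel (joinAt G G' v v') (Sum.inr v') (Sum.inl '' S ∪ Sum.inr '' S') 2 := by
  classical
  set S'' : Set (V ⊕ W) := Sum.inl '' S ∪ Sum.inr '' S' with hS''def
  have hmeml : ∀ x : V, Sum.inl x ∈ S'' ↔ x ∈ S := by intro x; simp [hS''def]
  have hmemr : ∀ x : W, Sum.inr x ∈ S'' ↔ x ∈ S' := by intro x; simp [hS''def]
  have hv'mem : Sum.inr v' ∉ S'' := fun h => hv'S' ((hmemr v').mp h)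
  have hncard2 : (S'' ∩ (joinAt G G' v v').neighborSet (Sum.inr v')).ncard = 2 := by
    rw [nbr_inr_v', ncard_inter_inr_sing, hS''def, preim_inr]
    rcases hcases with ⟨hvS, hc'⟩ | ⟨hvS, -, hc'⟩
    · rw [hc', if_pos (by rw [← hS''def, hmeml]; exact hvS)]
    · rw [hc', if_neg (by rw [← hS''def, hmeml]; exact hvS)]
  refine ⟨⟨?_, ?_, Or.inr (le_of_eq hncard2)⟩, ?_⟩
  · rintro (x | x) hx (y | y) hy hadj
    · exact hS.1 x ((hmeml x).mp hx) y ((hmeml y).mp hy) hadj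
    · obtain ⟨-, rfl⟩ := hadj; exact hv'S' ((hmemr _).mp hy)
    · obtain ⟨rfl, -⟩ := hadj; exact hv'S' ((hmemr _).mp hx)
    · exact hS'.1 x ((hmemr x).mp hx) y ((hmemr y).mp hy) hadj
  · rintro (x | x) hu hne
    · have hxS : x ∉ S := fun h => hu ((hmeml x).mpr h)
      by_cases hxv : x = v
      · subst hxv
        rcases hcases with ⟨hvS, -⟩ | ⟨-, hc, -⟩
        · exact absurd hvS hxS
        · rw [nbr_inl_v, ncard_inter_inl_sing, hS''def, preim_inl,
            if_neg (by rw [← hS''def]; exact hv'mem)]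
          omega
      · rw [nbr_inl_ne G G' v v' x hxv, ncard_inter_inl, hS''def, preim_inl]
        exact hS.2.1 x hxS hxv
    · have hxS : x ∉ S' := fun h => hu ((hmemr x).mpr h)
      have hxv : x ≠ v' := fun h => hne (by rw [h])
      rw [nbr_inr_ne G G' v v' x hxv, ncard_inter_inr, hS''def, preim_inr]
      exact hS'.2.1 x hxS hxv
  · exact Or.inr (Or.inl ⟨hv'mem, 2, by norm_num, hncard2, rfl⟩)

theorem statement19 {V W : Type*} [Fintype V] [Fintype W] [Nontrivial V]
    [Nontrivial W] (G : SimpleGraph V) (G' : SimpleGraph W) (v : V) (v' : W) :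
    (∀ S'' : Set (V ⊕ W),
      (TypeISet (joinAt G G' v v') (Sum.inr v') S'' ∧
          HasLabel (joinAt G G' v v') (Sum.inr v') S'' 2) ↔
        ∃ (S : Set V) (S' : Set W), S = Sum.inl ⁻¹' S'' ∧ S' = Sum.inr ⁻¹' S'' ∧
          S'' = Sum.inl '' S ∪ Sum.inr '' S' ∧ TypeISet G v S ∧ TypeISet G' v' S' ∧
          ((HasLabel G v S 0 ∧ HasLabel G' v' S' 1) ∨
           (HasLabel G v S 1 ∧ HasLabel G' v' S' 2) ∨
           (HasLabel G v S 2 ∧ HasLabel G' v' S' 2))) ∧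
    (∀ (R : Set V) (S' : Set W), TypeISet G v R → HasLabel G v R (-1) →
      TypeISet G' v' S' → HasLabel G' v' S' 1 →
      TypeISet (joinAt G G' v v') (Sum.inr v')
          (Sum.inl '' (R ∪ {v}) ∪ Sum.inr '' S') ∧
        HasLabel (joinAt G G' v v') (Sum.inr v')
          (Sum.inl '' (R ∪ {v}) ∪ Sum.inr '' S') 2) := by
  classical
  constructor
  · intro S''
    constructor
    · rintro ⟨⟨hind, hcond, -⟩, hlab⟩
      obtain ⟨hv''notS, hn2⟩ := hasLabel_nat (joinAt G G' v v') (Sum.inr v') S'' 2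
        one_le_two (by exact_mod_cast hlab)
      set S : Set V := Sum.inl ⁻¹' S'' with hSdef
      set S' : Set W := Sum.inr ⁻¹' S'' with hS'def
      have hdecomp : S'' = Sum.inl '' S ∪ Sum.inr '' S' := by
        ext b; cases b <;> simp [hSdef, hS'def]
      rw [nbr_inr_v', ncard_inter_inr_sing] at hn2
      rw [← hS'def] at hn2
      have hv'notS' : v' ∉ S' := hv''notS
      have hSind : IndepSet G S := fun u hu w hw h => hind (Sum.inl u) hu (Sum.inl w) hw h
      have hS'ind : IndepSet G' S' := fun u hu w hw h => hind (Sum.inr u) hu (Sum.inr w) hw h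
      have hScond : ∀ u, u ∉ S → u ≠ v →
          1 ≤ (S ∩ G.neighborSet u).ncard ∧ (S ∩ G.neighborSet u).ncard ≤ 2 := by
        intro u hu hne
        have := hcond (Sum.inl u) hu (by simp)
        rwa [nbr_inl_ne G G' v v' u hne, ncard_inter_inl] at this
      have hS'cond : ∀ u, u ∉ S' → u ≠ v' →
          1 ≤ (S' ∩ G'.neighborSet u).ncard ∧ (S' ∩ G'.neighborSet u).ncard ≤ 2 := by
        intro u hu hne
        have := hcond (Sum.inr u) hu (by simp [hne])
        rwa [nbr_inr_ne G G' v v' u hne, ncard_inter_inr] at this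
      by_cases hvS : Sum.inl v ∈ S''
      · rw [if_pos hvS] at hn2
        have hc' : (S' ∩ G'.neighborSet v').ncard = 1 := by omega
        refine ⟨S, S', rfl, rfl, hdecomp, ⟨hSind, hScond, Or.inl hvS⟩,
          ⟨hS'ind, hS'cond, Or.inr (by omega)⟩,
          Or.inl ⟨Or.inl ⟨hvS, rfl⟩, Or.inr (Or.inl ⟨hv'notS', 1, le_refl 1, hc', rfl⟩)⟩⟩
      · rw [if_neg hvS] at hn2
        have hc' : (S' ∩ G'.neighborSet v').ncard = 2 := by omega
        have hvcard := hcond (Sum.inl v) hvS (by simp)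
        rw [nbr_inl_v, ncard_inter_inl_sing, if_neg hv''notS] at hvcard
        rw [← hSdef] at hvcard
        have hvcard' : 1 ≤ (S ∩ G.neighborSet v).ncard ∧ (S ∩ G.neighborSet v).ncard ≤ 2 := by
          omega
        refine ⟨S, S', rfl, rfl, hdecomp, ⟨hSind, hScond, Or.inr hvcard'.2⟩,
          ⟨hS'ind, hS'cond, Or.inr (by omega)⟩, ?_⟩
        have hlabS' : HasLabel G' v' S' 2 :=
          Or.inr (Or.inl ⟨hv'notS', 2, one_le_two, hc', rfl⟩)
        rcases (by omega : (S ∩ G.neighborSet v).ncard = 1 ∨ (S ∩ G.neighborSet v).ncard = 2)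
          with h1 | h1
        · exact Or.inr (Or.inl ⟨Or.inr (Or.inl ⟨hvS, 1, le_refl 1, h1, rfl⟩), hlabS'⟩)
        · exact Or.inr (Or.inr ⟨Or.inr (Or.inl ⟨hvS, 2, one_le_two, h1, rfl⟩), hlabS'⟩)
    · rintro ⟨S, S', rfl, rfl, hdecomp, hS, hS', hlabels⟩
      rw [hdecomp]
      apply backward_main G G' v v' _ _ hS hS'
      · rcases hlabels with ⟨h0, h1⟩ | ⟨h1, h2⟩ | ⟨h2, h2'⟩
        · exact (hasLabel_nat G' v' _ 1 le_rfl (by exact_mod_cast h1)).1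
        · exact (hasLabel_nat G' v' _ 2 one_le_two (by exact_mod_cast h2)).1
        · exact (hasLabel_nat G' v' _ 2 one_le_two (by exact_mod_cast h2')).1
      · rcases hlabels with ⟨h0, h1⟩ | ⟨h1, h2⟩ | ⟨h2, h2'⟩
        · refine Or.inl ⟨?_, (hasLabel_nat G' v' _ 1 le_rfl (by exact_mod_cast h1)).2⟩
          rcases h0 with ⟨h, -⟩ | ⟨-, k, hk, -, he⟩ | ⟨-, -, -, he⟩ | ⟨-, -, -, he⟩
          · exact h
          all_goals omega
        · obtain ⟨hv1, hc1⟩ := hasLabel_nat G v _ 1 le_rfl (by exact_mod_cast h1)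
          exact Or.inr ⟨hv1, Or.inl hc1,
            (hasLabel_nat G' v' _ 2 one_le_two (by exact_mod_cast h2)).2⟩
        · obtain ⟨hv1, hc1⟩ := hasLabel_nat G v _ 2 one_le_two (by exact_mod_cast h2)
          exact Or.inr ⟨hv1, Or.inr hc1,
            (hasLabel_nat G' v' _ 2 one_le_two (by exact_mod_cast h2')).2⟩
  · intro R S' hR hRl hS' hS'l
    obtain ⟨hv'S', hc1⟩ := hasLabel_nat G' v' S' 1 le_rfl (by exact_mod_cast hS'l)
    exact backward_main G G' v v' (R ∪ {v}) S' (typeI_insert G v R hR hRl) hS' hv'S'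
      (Or.inl ⟨Or.inr rfl, hc1⟩)
end
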